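/- For every nonnegative integer n, ∑_{k=0}^{n} (−4)^k·k·C(n,k)·H_k = (1 − (−3)^n)/3 + (4n·(−3)^n/3)·(H_n − ∑_{k=1}^n 1/(k·(−3)^k)), as an identity of rational numbers. -/

import Mathlib

def harmonicQ (k : ℕ) : ℚ := ∑ i ∈ Finset.Icc 1 k, (1 : ℚ) / i

lemma harmonicQ_succ (k : ℕ) : harmonicQ (k+1) = harmonicQ k + 1/((k:ℚ)+1) := by
  unfold harmonicQ
  rw [Finset.sum_Icc_succ_top (by omega)]
  push_cast
  ring

lemma binom_neg4 (n : ℕ) :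
    ∑ k ∈ Finset.range (n+1), (-4:ℚ)^k * (n.choose k : ℚ) = (-3:ℚ)^n := by
  have h := add_pow (-4:ℚ) 1 n
  norm_num at h
  exact h.symm

lemma binG (m : ℕ) :
    ∑ k ∈ Finset.range (m+1), (-4:ℚ)^k * (m.choose k : ℚ) / ((k:ℚ)+1)
      = ((-3:ℚ)^(m+1) - 1) / (-4*((m:ℚ)+1)) := by
  have hm : ((m:ℚ)+1) ≠ 0 := by positivity
  have step : ∀ k ∈ Finset.range (m+1),
      (-4:ℚ)^k * (m.choose k : ℚ) / ((k:ℚ)+1)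
        = (-4:ℚ)^k * ((m+1).choose (k+1) : ℚ) / ((m:ℚ)+1) := by
    intro k _
    have h' : ((m:ℚ)+1) * (m.choose k : ℚ) = ((m+1).choose (k+1) : ℚ) * ((k:ℚ)+1) := by
      exact_mod_cast congrArg (fun x : ℕ => (x:ℚ)) (Nat.add_one_mul_choose_eq m k)
    have hk : ((k:ℚ)+1) ≠ 0 := by positivity
    rw [div_eq_div_iff hk hm]
    linear_combination ((-4:ℚ)^k) * h'
  rw [Finset.sum_congr rfl step, ← Finset.sum_div]
  have key : ∑ k ∈ Finset.range (m+1), (-4:ℚ)^(k+1) * ((m+1).choose (k+1) : ℚ)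
      = (-3:ℚ)^(m+1) - 1 := by
    have h := binom_neg4 (m+1)
    rw [Finset.sum_range_succ'] at h
    simp at h
    linarith
  have h2 : ∑ k ∈ Finset.range (m+1), (-4:ℚ)^(k+1) * ((m+1).choose (k+1) : ℚ)
      = -4 * ∑ k ∈ Finset.range (m+1), (-4:ℚ)^k * ((m+1).choose (k+1) : ℚ) := by
    rw [Finset.mul_sum]
    exact Finset.sum_congr rfl (fun k _ => by ring)
  have h3 : ∑ k ∈ Finset.range (m+1), (-4:ℚ)^k * ((m+1).choose (k+1) : ℚ)
      = ((-3:ℚ)^(m+1) - 1) / (-4) := by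
    rw [h2] at key; linarith
  rw [h3]
  field_simp

lemma keyF (n : ℕ) :
    ∑ k ∈ Finset.range (n+1), (-4:ℚ)^k * (n.choose k : ℚ) * harmonicQ k
      = (-3:ℚ)^n * (harmonicQ n - ∑ k ∈ Finset.Icc 1 n, 1/((k:ℚ)*(-3:ℚ)^k)) := by
  induction n with
  | zero => simp [harmonicQ]
  | succ n ih =>
    have hn1 : ((n:ℚ)+1) ≠ 0 := by positivity
    have h3 : ((-3:ℚ)^(n+1)) ≠ 0 := by positivity
    rw [Finset.sum_range_succ']
    simp only [Nat.cast_zero, pow_zero]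
    have hh0 : harmonicQ 0 = 0 := by simp [harmonicQ]
    rw [hh0]
    have pascal : ∀ k ∈ Finset.range (n+1),
        (-4:ℚ)^(k+1) * ((n+1).choose (k+1) : ℚ) * harmonicQ (k+1)
          = -4 * ((-4:ℚ)^k * (n.choose k : ℚ) * harmonicQ k)
            + -4 * ((-4:ℚ)^k * (n.choose k : ℚ) / ((k:ℚ)+1))
            + (-4:ℚ)^(k+1) * (n.choose (k+1) : ℚ) * harmonicQ (k+1) := by
      intro k _
      rw [Nat.choose_succ_succ, harmonicQ_succ]
      push_cast
      field_simp
      ring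
    rw [Finset.sum_congr rfl pascal]
    rw [Finset.sum_add_distrib, Finset.sum_add_distrib, ← Finset.mul_sum, ← Finset.mul_sum]
    have hlast : ∑ k ∈ Finset.range (n+1), (-4:ℚ)^(k+1) * (n.choose (k+1) : ℚ) * harmonicQ (k+1)
        = ∑ k ∈ Finset.range (n+1), (-4:ℚ)^k * (n.choose k : ℚ) * harmonicQ k := by
      rw [Finset.sum_range_succ]
      rw [Finset.sum_range_succ' (fun k => (-4:ℚ)^k * (n.choose k : ℚ) * harmonicQ k)]
      simp [hh0, Nat.choose_succ_self]
    rw [hlast, ih, binG]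
    rw [Finset.sum_Icc_succ_top (by omega : 1 ≤ n+1), harmonicQ_succ]
    push_cast
    field_simp
    ring

theorem harmonic_identity_2 (n : ℕ) :
    ∑ k ∈ Finset.range (n + 1), (-4 : ℚ) ^ k * (k : ℚ) * (n.choose k : ℚ) * harmonicQ k =
      (1 - (-3 : ℚ) ^ n) / 3 +
        4 * (n : ℚ) * (-3 : ℚ) ^ n / 3 *
          (harmonicQ n - ∑ k ∈ Finset.Icc 1 n, 1 / ((k : ℚ) * (-3) ^ k)) := by
  cases n with
  | zero => simp [harmonicQ]
  | succ m =>
    have hm1 : ((m:ℚ)+1) ≠ 0 := by positivity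
    have h3 : ((-3:ℚ)^(m+1)) ≠ 0 := by positivity
    rw [Finset.sum_range_succ']
    simp only [Nat.cast_zero, pow_zero]
    have hh0 : harmonicQ 0 = 0 := by simp [harmonicQ]
    rw [hh0]
    have step : ∀ k ∈ Finset.range (m+1),
        (-4:ℚ)^(k+1) * ((k:ℚ)+1) * ((m+1).choose (k+1) : ℚ) * harmonicQ (k+1)
          = (-4*((m:ℚ)+1)) * ((-4:ℚ)^k * (m.choose k : ℚ) * harmonicQ k)
            + (-4*((m:ℚ)+1)) * ((-4:ℚ)^k * (m.choose k : ℚ) / ((k:ℚ)+1)) := by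
      intro k _
      have h' : ((m:ℚ)+1) * (m.choose k : ℚ) = ((m+1).choose (k+1) : ℚ) * ((k:ℚ)+1) := by
        exact_mod_cast congrArg (fun x : ℕ => (x:ℚ)) (Nat.add_one_mul_choose_eq m k)
      have hk : ((k:ℚ)+1) ≠ 0 := by positivity
      rw [harmonicQ_succ]
      linear_combination (-(-4:ℚ)^(k+1) * (harmonicQ k + 1/((k:ℚ)+1))) * h'
    have congrsum : ∑ k ∈ Finset.range (m+1),
        (-4:ℚ)^(k+1) * (((k:ℕ)+1 : ℕ):ℚ) * ((m+1).choose (k+1) : ℚ) * harmonicQ (k+1)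
        = ∑ k ∈ Finset.range (m+1),
          ((-4*((m:ℚ)+1)) * ((-4:ℚ)^k * (m.choose k : ℚ) * harmonicQ k)
            + (-4*((m:ℚ)+1)) * ((-4:ℚ)^k * (m.choose k : ℚ) / ((k:ℚ)+1))) := by
      apply Finset.sum_congr rfl
      intro k hk
      push_cast
      exact step k hk
    rw [congrsum, Finset.sum_add_distrib, ← Finset.mul_sum, ← Finset.mul_sum, keyF, binG]
    rw [Finset.sum_Icc_succ_top (by omega : 1 ≤ m+1), harmonicQ_succ]
    push_cast
    field_simp
    ring
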